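/- For w ≥ 1, k ≥ 0, the operator J^{w+k}(k) on the degree-one subspace of gr(S(ℂ)) (with basis β_l, γ_l, l ≥ 0, where β_l and γ_l are images of ∂^l β(z) and ∂^l γ(z)) acts by J^{w+k}(k)(β_l) = λ^w_{k,l} β_{l+w} and J^{w+k}(k)(γ_l) = μ^w_{k,l} γ_{l+w}, where λ^w_{k,l} = −l!/(l−k)! if l ≥ k and 0 otherwise, and μ^w_{k,l} = (−1)^{w+k}(w+k+l)!/(l+w)!. -/

import Mathlib

noncomputable def zc (m : ℤ) (l : ℕ) : ℂ :=
  (∏ i ∈ Finset.range l, ((m : ℂ) - (i : ℂ))) / (l.factorial : ℂ)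

noncomputable def sgn (i j : ZMod 2) : ℂ := (-1 : ℂ) ^ ((i * j).val)

lemma sgn00 : sgn 0 0 = 1 := by simp [sgn]

lemma zc_zero' (j : ℕ) (hj : j ≠ 0) : zc 0 j = 0 := by
  unfold zc
  rw [Finset.prod_eq_zero (Finset.mem_range.2 (Nat.pos_of_ne_zero hj)) (by simp), zero_div]

lemma zc_m_zero (m : ℤ) : zc m 0 = 1 := by simp [zc]

lemma zc_neg_one (j : ℕ) : (-1:ℂ)^j * zc (-1) j = 1 := by
  unfold zc
  have : ∏ i ∈ Finset.range j, ((-1 : ℤ) - (i:ℤ) : ℂ) = (-1)^j * (j.factorial : ℂ) := by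
    induction j with
    | zero => simp
    | succ n ih =>
      rw [Finset.prod_range_succ, ih]
      push_cast [Nat.factorial_succ]
      ring
  push_cast at this ⊢
  rw [this]
  have h : (j.factorial : ℂ) ≠ 0 := Nat.cast_ne_zero.2 (Nat.factorial_ne_zero j)
  field_simp
  rw [← pow_mul, pow_mul']
  norm_num

lemma prod_cast_desc (n j : ℕ) :
    ∏ i ∈ Finset.range j, ((n:ℂ) - (i:ℂ)) = (n.descFactorial j : ℂ) := by
  induction j with
  | zero => simp
  | succ m ih =>
    rw [Finset.prod_range_succ, ih, Nat.descFactorial_succ]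
    rcases le_or_gt m n with h | h
    · push_cast [h]; ring
    · rw [Nat.descFactorial_eq_zero_iff_lt.2 h, Nat.sub_eq_zero_of_le h.le]
      simp

lemma zc_nat (n j : ℕ) : zc (n:ℤ) j = (n.choose j : ℂ) := by
  unfold zc
  push_cast
  rw [prod_cast_desc, Nat.descFactorial_eq_factorial_mul_choose]
  push_cast
  rw [mul_comm, mul_div_assoc, div_self (Nat.cast_ne_zero.2 (Nat.factorial_ne_zero j)), mul_one]

lemma zc_nat_zero (n j : ℕ) (h : n < j) : zc (n:ℤ) j = 0 := by
  rw [zc_nat, Nat.choose_eq_zero_of_lt h, Nat.cast_zero]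

lemma prod_shift (D m : ℕ) :
    ∏ s ∈ Finset.range m, ((m:ℂ) - 1 - (D:ℂ) - (s:ℂ)) = (-1:ℂ)^m * (D.descFactorial m : ℂ) := by
  have h1 : ∏ s ∈ Finset.range m, ((s:ℂ) - (D:ℂ)) = (-1:ℂ)^m * (D.descFactorial m : ℂ) := by
    rw [← prod_cast_desc D m]
    have : ∀ s ∈ Finset.range m, ((s:ℂ) - D) = (-1) * ((D:ℂ) - s) := by intros; ring
    rw [Finset.prod_congr rfl this, Finset.prod_mul_distrib, Finset.prod_const,
      Finset.card_range]
  have h2 : ∏ s ∈ Finset.range m, ((m:ℂ) - 1 - (D:ℂ) - (s:ℂ))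
      = ∏ s ∈ Finset.range m, (((m - 1 - s : ℕ):ℂ) - (D:ℂ)) := by
    apply Finset.prod_congr rfl
    intro s hs
    have hsm := Finset.mem_range.1 hs
    have h1s : s ≤ m - 1 := by omega
    have h1m : 1 ≤ m := by omega
    rw [Nat.cast_sub h1s, Nat.cast_sub h1m, Nat.cast_one]
    ring
  rw [h2, Finset.prod_range_reflect (fun s => ((s:ℂ) - (D:ℂ))) m, h1]

class VertexSuperAlg (V : Type) [AddCommGroup V] [Module ℂ V] where
  pr : ℤ → V →ₗ[ℂ] V →ₗ[ℂ] V
  vac : V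
  T : Module.End ℂ V
  deg : ZMod 2 → Submodule ℂ V
  grading : ∀ v : V, ∃ v0 ∈ deg 0, ∃ v1 ∈ deg 1, v = v0 + v1
  vac_deg : vac ∈ deg 0
  pr_deg : ∀ (i j : ZMod 2) (n : ℤ) (a b : V), a ∈ deg i → b ∈ deg j → pr n a b ∈ deg (i + j)
  T_deg : ∀ (i : ZMod 2) (a : V), a ∈ deg i → T a ∈ deg i
  trunc : ∀ a b : V, ∃ N : ℕ, ∀ n : ℕ, N ≤ n → pr (n : ℤ) a b = 0
  vac_left : ∀ (n : ℤ) (a : V), pr n vac a = if n = -1 then a else 0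
  create : ∀ (a : V) (n : ℤ), 0 ≤ n → pr n a vac = 0
  create_neg_one : ∀ a : V, pr (-1) a vac = a
  T_def : ∀ a : V, T a = pr (-2) a vac
  T_deriv : ∀ (a b : V) (n : ℤ), pr n (T a) b = (-n : ℂ) • pr (n - 1) a b
  borcherds : ∀ (i j : ZMod 2) (a b c : V), a ∈ deg i → b ∈ deg j → ∀ m n k : ℤ,
    (∑ᶠ l : ℕ, zc m l • pr (m + k - l) (pr (n + l) a b) c)
      = ∑ᶠ l : ℕ, ((-1 : ℂ) ^ l * zc n l) •
          (pr (m + n - l) a (pr (k + l) b c)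
            - (sgn i j * (-1 : ℂ) ^ n) • pr (n + k - l) b (pr (m + l) a c))

open VertexSuperAlg

variable {V : Type} [AddCommGroup V] [Module ℂ V] [VertexSuperAlg V]

lemma pr_T_pow (p : ℕ) (n : ℤ) (a b : V) :
    pr n ((T ^ p) a) b
      = ((-1:ℂ)^p * ∏ i ∈ Finset.range p, ((n:ℂ) - (i:ℂ))) • pr (n - p) a b := by
  induction p generalizing n with
  | zero => simp
  | succ q ih =>
    have hTs : (T ^ (q+1)) a = T ((T ^ q) a) := by
      rw [pow_succ']; rfl
    rw [hTs, T_deriv, ih (n-1)]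
    rw [smul_smul]
    have h1 : (n : ℤ) - 1 - q = n - (q+1 : ℕ) := by push_cast; ring
    rw [h1]
    congr 1
    rw [Finset.prod_range_succ']
    push_cast
    have : ∀ i ∈ Finset.range q, ((n:ℂ) - 1 - i) = (n - (i + 1)) := by intros; ring
    rw [Finset.prod_congr rfl this]
    ring

lemma T_pow_deg (p : ℕ) (i : ZMod 2) (a : V) (h : a ∈ deg i) : (T ^ p) a ∈ deg i := by
  induction p with
  | zero => simpa using h
  | succ q ih =>
    have : (T ^ (q+1)) a = T ((T ^ q) a) := by rw [pow_succ']; rfl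
    rw [this]; exact T_deg i _ ih

lemma prod_neg_two (q : ℕ) :
    ∏ i ∈ Finset.range q, ((-2:ℂ) - (i:ℂ)) = (-1:ℂ)^q * ((q+1).factorial : ℂ) := by
  induction q with
  | zero => simp
  | succ r ihr =>
    rw [Finset.prod_range_succ, ihr]
    push_cast [Nat.factorial_succ]
    ring

lemma T_pow_eq (l : ℕ) (x : V) :
    (T ^ l) x = (l.factorial : ℂ) • pr (-(l:ℤ)-1) x vac := by
  induction l with
  | zero => simp [create_neg_one]
  | succ q ih =>
    have hTs : (T ^ (q+1)) x = T ((T ^ q) x) := by rw [pow_succ']; rfl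
    rw [hTs, T_def, pr_T_pow]
    have he : (-2 : ℤ) - q = -(q+1 : ℕ) - 1 := by push_cast; ring
    rw [he]
    congr 1
    push_cast
    rw [prod_neg_two, ← mul_assoc, ← mul_pow]
    norm_num

lemma borcherds0 (a b : V) (ha : a ∈ deg 0) (hb : b ∈ deg 0) (M K : ℤ) :
    (∑ᶠ j : ℕ, zc M j • pr (M + K - (j:ℤ)) (pr (j:ℤ) a b) (vac:V))
      = pr M a (pr K b vac) - pr K b (pr M a vac) := by
  have h := borcherds (V:=V) 0 0 a b vac ha hb M 0 K
  have hL : (∑ᶠ l : ℕ, zc M l • pr (M + K - l) (pr ((0:ℤ) + l) a b) (vac:V))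
      = ∑ᶠ j : ℕ, zc M j • pr (M + K - (j:ℤ)) (pr (j:ℤ) a b) (vac:V) := by
    apply finsum_congr; intro j; rw [zero_add]
  rw [hL] at h
  rw [h, finsum_eq_single _ 0]
  · simp [sgn00, zc_m_zero]
  · intro j hj
    rw [zc_zero' j hj, mul_zero, zero_smul]

lemma neg_one_zpow_neg_one : ((-1:ℂ)^(-1:ℤ)) = -1 := by
  rw [zpow_neg_one]; norm_num

lemma wick_mode (a b c : V) (ha : a ∈ deg 0) (hb : b ∈ deg 0) (K : ℤ) :
    pr K (pr (-1) a b) c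
      = ∑ᶠ j : ℕ, (pr (-1 - (j:ℤ)) a (pr (K + j) b c) + pr (K - 1 - j) b (pr (j:ℤ) a c)) := by
  have h := borcherds (V:=V) 0 0 a b c ha hb 0 (-1) K
  have hL : (∑ᶠ l : ℕ, zc 0 l • pr (0 + K - l) (pr (-1 + l) a b) c) = pr K (pr (-1) a b) c := by
    rw [finsum_eq_single _ 0]
    · simp [zc_m_zero]
    · intro j hj; rw [zc_zero' j hj, zero_smul]
  rw [hL] at h
  rw [h]
  apply finsum_congr
  intro j
  have h1 : (0:ℤ) + -1 - j = -1 - j := by ring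
  have h2 : (-1:ℤ) + K - j = K - 1 - j := by ring
  have h3 : (0:ℤ) + j = j := by ring
  rw [h1, h2, h3, zc_neg_one, one_smul, sgn00, one_mul, neg_one_zpow_neg_one,
    neg_smul, one_smul, sub_neg_eq_add]

lemma prod_factor_zero (m : ℤ) (p : ℕ) (h0 : 0 ≤ m) (hp : m < p) :
    ∏ i ∈ Finset.range p, ((m:ℂ) - (i:ℂ)) = 0 := by
  apply Finset.prod_eq_zero (Finset.mem_range.2 (show m.toNat < p by omega))
  rw [sub_eq_zero]
  exact_mod_cast (Int.toNat_of_nonneg h0).symm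

lemma pr_Tp_ββ (β : V) (hββ : ∀ m : ℤ, 0 ≤ m → pr m β β = 0) (p : ℕ) (m : ℤ)
    (hm : 0 ≤ m) : pr m ((T^p) β) β = 0 := by
  rw [pr_T_pow]
  rcases le_or_gt (p:ℤ) m with h | h
  · rw [hββ _ (by omega), smul_zero]
  · rw [prod_factor_zero m p hm h, mul_zero, zero_smul]

lemma pr_Tp_vac (x : V) (p : ℕ) (m : ℤ) (hm : 0 ≤ m) : pr m ((T^p) x) vac = 0 := by
  rw [pr_T_pow]
  rcases le_or_gt (p:ℤ) m with h | h
  · rw [create x (m - p) (by omega), smul_zero]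
  · rw [prod_factor_zero m p hm h, mul_zero, zero_smul]

lemma pr_Tp_βγ (β γ : V) (hβγ0 : pr 0 β γ = (vac:V))
    (hβγpos : ∀ m : ℤ, 1 ≤ m → pr m β γ = 0) (p : ℕ) (m : ℤ) (hm : 0 ≤ m) :
    pr m ((T^p) β) γ
      = if m = (p:ℤ) then ((-1:ℂ)^p * (p.factorial:ℂ)) • (vac:V) else 0 := by
  rw [pr_T_pow]
  rcases lt_trichotomy m (p:ℤ) with h | h | h
  · rw [if_neg (by omega), prod_factor_zero m p hm h, mul_zero, zero_smul]
  · rw [if_pos h, h]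
    have hc : (((p:ℤ):ℂ)) = ((p:ℕ):ℂ) := by push_cast; ring
    rw [show ((p:ℤ) - (p:ℤ)) = 0 by ring, hβγ0]
    congr 2
    push_cast
    rw [prod_cast_desc, Nat.descFactorial_self]
  · rw [if_neg (by omega), hβγpos _ (by omega), smul_zero]

lemma Jbeta (β γ : V) (hβdeg : β ∈ deg (V:=V) 0) (hγdeg : γ ∈ deg (V:=V) 0)
    (hγβ0 : pr 0 γ β = -(vac:V)) (hγβpos : ∀ m : ℤ, 1 ≤ m → pr m γ β = 0)
    (hββ : ∀ m : ℤ, 0 ≤ m → pr m β β = 0) (p : ℕ) (j : ℕ) :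
    pr (j:ℤ) (pr (-1) γ ((T^p) β)) β = if j = 0 then -((T^p) β) else 0 := by
  rw [wick_mode γ ((T^p) β) β hγdeg (T_pow_deg p 0 β hβdeg)]
  rw [finsum_eq_single _ 0]
  · rw [Nat.cast_zero, add_zero, sub_zero, pr_Tp_ββ β hββ p _ (by positivity), map_zero,
      hγβ0, map_neg, zero_add]
    rcases Nat.eq_zero_or_pos j with hj | hj
    · subst hj
      rw [if_pos rfl, Nat.cast_zero]
      norm_num [create_neg_one]
    · rw [if_neg (by omega), pr_Tp_vac β p _ (by omega), neg_zero]
  · intro i hi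
    rw [pr_Tp_ββ β hββ p _ (by positivity), map_zero,
      hγβpos _ (by exact_mod_cast Nat.one_le_cast.2 (Nat.pos_of_ne_zero hi)), map_zero,
      add_zero]

lemma Jgamma (β γ : V) (hβdeg : β ∈ deg (V:=V) 0) (hγdeg : γ ∈ deg (V:=V) 0)
    (hβγ0 : pr 0 β γ = (vac:V)) (hβγpos : ∀ m : ℤ, 1 ≤ m → pr m β γ = 0)
    (hγγ : ∀ m : ℤ, 0 ≤ m → pr m γ γ = 0) (p : ℕ) (j : ℕ) (hj : j ≤ p) :
    pr (j:ℤ) (pr (-1) γ ((T^p) β)) γ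
      = ((-1:ℂ)^p * (p.factorial : ℂ) / (((p-j).factorial : ℂ))) • (T^(p-j)) γ := by
  rw [wick_mode γ ((T^p) β) γ hγdeg (T_pow_deg p 0 β hβdeg)]
  rw [finsum_eq_single _ (p - j)]
  · rw [hγγ _ (by positivity), map_zero, add_zero]
    rw [pr_Tp_βγ β γ hβγ0 hβγpos p _ (by positivity),
      if_pos (show (j:ℤ) + (p - j : ℕ) = (p:ℤ) by push_cast [Nat.cast_sub hj]; ring)]
    rw [map_smul]
    rw [show (-1 - ((p-j:ℕ):ℤ)) = (-((p-j:ℕ):ℤ) - 1) by ring]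
    rw [T_pow_eq (p-j) γ, smul_smul]
    congr 1
    have h0 : ((p-j).factorial : ℂ) ≠ 0 := Nat.cast_ne_zero.2 (Nat.factorial_ne_zero _)
    field_simp
  · intro i hi
    rw [hγγ _ (by positivity), map_zero, add_zero]
    rw [pr_Tp_βγ β γ hβγ0 hβγpos p _ (by positivity),
      if_neg (show ¬((j:ℤ) + i = (p:ℤ)) by push_cast; intro hc; apply hi; omega), map_zero]

noncomputable def lam (k l : ℕ) : ℂ :=
  if k ≤ l then -((l.factorial : ℂ) / ((l - k).factorial : ℂ)) else 0

noncomputable def mu (w k l : ℕ) : ℂ :=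
  (-1 : ℂ) ^ (w + k) * ((w + k + l).factorial : ℂ) / ((l + w).factorial : ℂ)

lemma nat_vandermonde_desc (a b k : ℕ) :
    ∑ j ∈ Finset.range (k+1), k.choose j * (a.descFactorial j * b.descFactorial (k-j))
      = (a+b).descFactorial k := by
  rw [Nat.descFactorial_eq_factorial_mul_choose, Nat.add_choose_eq,
    Finset.Nat.sum_antidiagonal_eq_sum_range_succ_mk, Finset.mul_sum]
  apply Finset.sum_congr rfl
  intro j hj
  have hjk : j ≤ k := by simpa using Nat.lt_succ_iff.1 (Finset.mem_range.1 hj)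
  rw [Nat.descFactorial_eq_factorial_mul_choose a, Nat.descFactorial_eq_factorial_mul_choose b,
    ← Nat.choose_mul_factorial_mul_factorial hjk]
  ring

lemma nat_sum_key (w k l : ℕ) :
    ∑ j ∈ Finset.range (k+1),
        k.choose j * ((w+k).descFactorial j * (l+w).descFactorial (w+k-j))
      = (l+w).descFactorial w * (l+w+k).descFactorial k := by
  rw [← Finset.sum_range_reflect]
  have h : ∀ j ∈ Finset.range (k+1),
      k.choose (k+1-1-j) * ((w+k).descFactorial (k+1-1-j) * (l+w).descFactorial (w+k-(k+1-1-j)))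
        = (l+w).descFactorial w * (k.choose j * (l.descFactorial j * (w+k).descFactorial (k-j))) := by
    intro j hj
    have hjk : j ≤ k := by simpa using Nat.lt_succ_iff.1 (Finset.mem_range.1 hj)
    have h1 : k+1-1-j = k-j := by omega
    have h2 : w+k-(k-j) = w+j := by omega
    rw [h1, h2, Nat.choose_symm hjk]
    have h3 : (l+w).descFactorial (w+j) = l.descFactorial j * (l+w).descFactorial w := by
      have := Nat.descFactorial_mul_descFactorial (k := w) (m := w+j) (n := l+w)
        (Nat.le_add_right w j)
      simpa using this.symm
    rw [h3]
    ring
  rw [Finset.sum_congr rfl h, ← Finset.mul_sum, nat_vandermonde_desc l (w+k) k]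
  congr 2
  omega

lemma lam_eq (w k l : ℕ) :
    lam k l = -((l.factorial:ℂ) * ((l+w).descFactorial (w+k):ℂ) / ((l+w).factorial:ℂ)) := by
  by_cases h : k ≤ l
  · rw [lam, if_pos h]
    have hd : ((l-k).factorial) * ((l+w).descFactorial (w+k)) = (l+w).factorial := by
      have := Nat.factorial_mul_descFactorial (n := l+w) (k := w+k) (by omega)
      rwa [show (l+w)-(w+k) = l-k by omega] at this
    have hd' : ((l-k).factorial:ℂ) * ((l+w).descFactorial (w+k):ℂ) = ((l+w).factorial:ℂ) := by
      exact_mod_cast congrArg (Nat.cast : ℕ → ℂ) hd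
    have h1 : ((l-k).factorial:ℂ) ≠ 0 := Nat.cast_ne_zero.2 (Nat.factorial_ne_zero _)
    have h2 : ((l+w).factorial:ℂ) ≠ 0 := Nat.cast_ne_zero.2 (Nat.factorial_ne_zero _)
    field_simp
    linear_combination (l.factorial:ℂ) * hd'
  · rw [lam, if_neg h]
    rw [Nat.descFactorial_eq_zero_iff_lt.2 (by omega)]
    simp

lemma mu_eq (w k l : ℕ) :
    (l.factorial:ℂ) * (((-1:ℂ)^(w+k) / ((l+w).factorial:ℂ)) *
      (((l+w).descFactorial w:ℂ) * ((l+w+k).descFactorial k:ℂ))) = mu w k l := by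
  have hd1 : (l.factorial) * ((l+w).descFactorial w) = (l+w).factorial := by
    have := Nat.factorial_mul_descFactorial (n := l+w) (k := w) (by omega)
    rwa [show (l+w)-w = l by omega] at this
  have hd2 : ((l+w).factorial) * ((l+w+k).descFactorial k) = (l+w+k).factorial := by
    have := Nat.factorial_mul_descFactorial (n := l+w+k) (k := k) (by omega)
    rwa [show (l+w+k)-k = l+w by omega] at this
  have hd1' : ((l.factorial:ℂ)) * (((l+w).descFactorial w:ℂ)) = ((l+w).factorial:ℂ) := by
    exact_mod_cast congrArg (Nat.cast : ℕ → ℂ) hd1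
  have hd2' : (((l+w).factorial:ℂ)) * (((l+w+k).descFactorial k:ℂ)) = ((l+w+k).factorial:ℂ) := by
    exact_mod_cast congrArg (Nat.cast : ℕ → ℂ) hd2
  have h2 : ((l+w).factorial:ℂ) ≠ 0 := Nat.cast_ne_zero.2 (Nat.factorial_ne_zero _)
  rw [mu, show w+k+l = l+w+k by omega]
  field_simp
  linear_combination ((l+w+k).descFactorial k:ℂ) * hd1'
    + hd2'

lemma pr_neg_vac (m : ℕ) (x : V) :
    pr (-(m:ℤ)-1) x vac = ((m.factorial:ℂ))⁻¹ • (T^m) x := by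
  rw [T_pow_eq m x, smul_smul, inv_mul_cancel₀ (Nat.cast_ne_zero.2 (Nat.factorial_ne_zero _)),
    one_smul]

/-- In the rank-one `βγ`-system `S(ℂ)` — an (even) vertex algebra with generators `β, γ`
satisfying `β ∘_0 γ = 1`, `γ ∘_0 β = −1`, all other nonnegative products of generators
vanishing — let `J^l = :γ ∂^l β:` and let `J^l(k)` denote the mode acting as `J^l ∘_k`.
For `w ≥ 1` and `k ≥ 0`, the weight-`w` mode `J^{w+k}(k)` acts on the degree-one part of
`gr(S(ℂ))` (spanned by the classes `β_l, γ_l` of `∂^l β, ∂^l γ` modulo the degree-zero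
piece `ℂ·vac`) by `β_l ↦ λ^w_{k,l} β_{l+w}` and `γ_l ↦ μ^w_{k,l} γ_{l+w}`. -/
theorem mode_action_on_gr_degree_one (S : Type) [AddCommGroup S] [Module ℂ S]
    [VertexSuperAlg S] (β γ : S)
    (hβdeg : β ∈ deg (V := S) 0) (hγdeg : γ ∈ deg (V := S) 0)
    (hβγ0 : pr 0 β γ = (vac : S))
    (hβγpos : ∀ m : ℤ, 1 ≤ m → pr m β γ = 0)
    (hγβ0 : pr 0 γ β = -(vac : S))
    (hγβpos : ∀ m : ℤ, 1 ≤ m → pr m γ β = 0)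
    (hββ : ∀ m : ℤ, 0 ≤ m → pr m β β = 0)
    (hγγ : ∀ m : ℤ, 0 ≤ m → pr m γ γ = 0)
    (w k : ℕ) (hw : 1 ≤ w) (l : ℕ) :
    (∃ c : ℂ, pr (k : ℤ) (pr (-1) γ ((T ^ (w + k)) β)) ((T ^ l) β)
        = lam k l • (T ^ (l + w)) β + c • (vac : S)) ∧
    (∃ c : ℂ, pr (k : ℤ) (pr (-1) γ ((T ^ (w + k)) β)) ((T ^ l) γ)
        = mu w k l • (T ^ (l + w)) γ + c • (vac : S)) := by
  have hJdeg : pr (-1) γ ((T ^ (w + k)) β) ∈ deg (V := S) 0 := by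
    simpa using pr_deg 0 0 (-1) γ ((T^(w+k)) β) hγdeg (T_pow_deg (w+k) 0 β hβdeg)
  have hJvac : pr (k:ℤ) (pr (-1) γ ((T ^ (w + k)) β)) (vac : S) = 0 :=
    create _ (k:ℤ) (by positivity)
  have hmain : ∀ x : S, x ∈ deg (V := S) 0 →
      pr (k:ℤ) (pr (-1) γ ((T ^ (w + k)) β)) ((T^l) x)
        = (l.factorial:ℂ) • ∑ᶠ j:ℕ, zc (k:ℤ) j •
            pr ((k:ℤ) + (-(l:ℤ)-1) - j) (pr (j:ℤ) (pr (-1) γ ((T ^ (w + k)) β)) x) vac := by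
    intro x hx
    rw [T_pow_eq l x, map_smul]
    congr 1
    have h0 := borcherds0 (pr (-1) γ ((T ^ (w + k)) β)) x hJdeg hx (k:ℤ) (-(l:ℤ)-1)
    rw [hJvac, map_zero, sub_zero] at h0
    exact h0.symm
  have h2 : ((l+w).factorial:ℂ) ≠ 0 := Nat.cast_ne_zero.2 (Nat.factorial_ne_zero _)
  constructor
  · -- β part
    refine ⟨0, ?_⟩
    rw [zero_smul, add_zero, hmain β hβdeg, finsum_eq_single _ 0]
    · rw [Jbeta β γ hβdeg hγdeg hγβ0 hγβpos hββ (w+k) 0, if_pos rfl]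
      rw [zc_m_zero, one_smul, Nat.cast_zero, sub_zero, map_neg, LinearMap.neg_apply,
        pr_T_pow]
      rw [show (k:ℤ) + (-(l:ℤ)-1) - ((w+k:ℕ):ℤ) = -((l+w:ℕ):ℤ)-1 by push_cast; ring]
      rw [pr_neg_vac (l+w) β]
      have hprod : ∏ i ∈ Finset.range (w+k), (((((k:ℤ) + (-(l:ℤ)-1)) : ℤ):ℂ) - (i:ℂ))
          = (-1:ℂ)^(w+k) * ((l+w).descFactorial (w+k):ℂ) := by
        rw [← prod_shift (l+w) (w+k)]
        apply Finset.prod_congr rfl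
        intro i _
        push_cast
        ring
      rw [hprod, smul_smul, smul_neg, ← neg_smul, smul_smul, lam_eq w k l]
      congr 1
      have hsq : (-1:ℂ)^(w+k) * (-1:ℂ)^(w+k) = 1 := by
        rw [← pow_add, ← two_mul, pow_mul]; norm_num
      rw [div_eq_mul_inv]
      linear_combination (-(l.factorial:ℂ) * ((l+w).descFactorial (w+k):ℂ) *
        (((l+w).factorial:ℂ))⁻¹) * hsq
    · intro j hj
      rw [Jbeta β γ hβdeg hγdeg hγβ0 hγβpos hββ (w+k) j, if_neg hj, map_zero,
        LinearMap.zero_apply, smul_zero]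
  · -- γ part
    refine ⟨0, ?_⟩
    rw [zero_smul, add_zero, hmain γ hγdeg]
    rw [finsum_eq_sum_of_support_subset _ (s := Finset.range (k+1))
      (Function.support_subset_iff'.2 ?hout)]
    case hout =>
      intro j hj
      rw [zc_nat_zero k j (by simpa using hj), zero_smul]
    have hterm : ∀ j ∈ Finset.range (k+1),
        zc (k:ℤ) j • pr ((k:ℤ) + (-(l:ℤ)-1) - j)
            (pr (j:ℤ) (pr (-1) γ ((T ^ (w + k)) β)) γ) vac
          = (((-1:ℂ)^(w+k) / ((l+w).factorial:ℂ)) *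
              ((k.choose j:ℂ) * (((w+k).descFactorial j:ℂ) *
                ((l+w).descFactorial (w+k-j):ℂ)))) • (T^(l+w)) γ := by
      intro j hj
      have hjk : j ≤ k := Nat.lt_succ_iff.1 (Finset.mem_range.1 hj)
      have hjwk : j ≤ w + k := by omega
      rw [Jgamma β γ hβdeg hγdeg hβγ0 hβγpos hγγ (w+k) j hjwk]
      rw [map_smul, LinearMap.smul_apply, pr_T_pow]
      rw [show (k:ℤ) + (-(l:ℤ)-1) - (j:ℤ) - ((w+k-j:ℕ):ℤ) = -((l+w:ℕ):ℤ)-1 by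
        push_cast [Nat.cast_sub hjwk]; ring]
      rw [pr_neg_vac (l+w) γ]
      have hprod : ∏ i ∈ Finset.range (w+k-j),
          (((((k:ℤ) + (-(l:ℤ)-1) - (j:ℤ)) : ℤ):ℂ) - (i:ℂ))
            = (-1:ℂ)^(w+k-j) * ((l+w).descFactorial (w+k-j):ℂ) := by
        rw [← prod_shift (l+w) (w+k-j)]
        apply Finset.prod_congr rfl
        intro i _
        push_cast [Nat.cast_sub hjwk]
        ring
      rw [hprod, zc_nat, smul_smul, smul_smul, smul_smul]
      congr 1
      have hsq : (-1:ℂ)^(w+k-j) * (-1:ℂ)^(w+k-j) = 1 := by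
        rw [← pow_add, ← two_mul, pow_mul]; norm_num
      have hfd : ((w+k-j).factorial:ℂ) * ((w+k).descFactorial j:ℂ) = ((w+k).factorial:ℂ) := by
        have := Nat.factorial_mul_descFactorial (n := w+k) (k := j) hjwk
        rw [show (w+k)-j = w+k-j by omega] at this
        exact_mod_cast congrArg (Nat.cast : ℕ → ℂ) this
      have h3 : ((w+k-j).factorial:ℂ) ≠ 0 := Nat.cast_ne_zero.2 (Nat.factorial_ne_zero _)
      have hfd' : ((w+k).factorial:ℂ) * (((w+k-j).factorial:ℂ))⁻¹
          = ((w+k).descFactorial j:ℂ) := by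
        field_simp
        linear_combination -hfd
      rw [div_eq_mul_inv, div_eq_mul_inv]
      linear_combination
        ((k.choose j:ℂ) * (-1:ℂ)^(w+k) * ((l+w).descFactorial (w+k-j):ℂ) *
          (((l+w).factorial:ℂ))⁻¹ * (((w+k).factorial:ℂ) * (((w+k-j).factorial:ℂ))⁻¹)) * hsq
        + ((k.choose j:ℂ) * (-1:ℂ)^(w+k) * ((l+w).descFactorial (w+k-j):ℂ) *
          (((l+w).factorial:ℂ))⁻¹) * hfd'
    rw [Finset.sum_congr rfl hterm, ← Finset.sum_smul, smul_smul]
    congr 1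
    rw [← Finset.mul_sum]
    have hnat := congrArg (Nat.cast : ℕ → ℂ) (nat_sum_key w k l)
    push_cast at hnat
    rw [hnat]
    exact mu_eq w k l
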